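/- Let D ∈ ℤ^{k×n} be a matrix in Smith normal form with all invariant factors equal to 1 and with zero-columns exactly the last s columns (s ≥ 1), i.e., D = (I_k | 0) up to this shape with k = n - s. Let w ∈ ℤ^n. Then the (k+1) × n matrix obtained by appending the row w to D has all invariant factors equal to 1 if and only if gcd(w_{k+1}, ..., w_n) = 1. -/

import Mathlib

/-- All `k+1` invariant factors of the matrix `M` equal `1`: there are unimodular
`P`, `Q` with `P M Q = (I_{k+1} | 0)`. -/
def allDiagonalOnes {m n : ℕ} (M : Matrix (Fin m) (Fin n) ℤ) : Prop :=
  ∃ (P : Matrix (Fin m) (Fin m) ℤ) (Q : Matrix (Fin n) (Fin n) ℤ),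
    IsUnit P.det ∧ IsUnit Q.det ∧
      P * M * Q = Matrix.of fun (i : Fin m) (j : Fin n) =>
        if (i : ℕ) = (j : ℕ) then (1 : ℤ) else 0

private lemma bezout_finset {n : ℕ} (w : Fin n → ℤ) (T : Finset (Fin n)) :
    ∃ x : Fin n → ℤ, (∀ j ∉ T, x j = 0) ∧ ∑ j ∈ T, x j * w j = T.gcd w := by
  classical
  induction T using Finset.induction_on with
  | empty => exact ⟨0, fun _ _ => rfl, by simp⟩
  | @insert a T ha ih =>
    obtain ⟨x, hx0, hxs⟩ := ih
    set g := T.gcd w with hg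
    refine ⟨fun j => if j = a then Int.gcdA (w a) g else Int.gcdB (w a) g * x j, ?_, ?_⟩
    · intro j hj
      rw [Finset.mem_insert] at hj
      push_neg at hj
      simp [hj.1, hx0 j hj.2]
    · rw [Finset.sum_insert ha, Finset.gcd_insert]
      have h1 : ∑ j ∈ T, (if j = a then Int.gcdA (w a) g else Int.gcdB (w a) g * x j) * w j
          = Int.gcdB (w a) g * ∑ j ∈ T, x j * w j := by
        rw [Finset.mul_sum]
        refine Finset.sum_congr rfl fun j hj => ?_
        have : j ≠ a := fun h => ha (h ▸ hj)
        simp [this, mul_assoc]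
      have hbez := Int.gcd_eq_gcd_ab (w a) g
      have hcoe : (Int.gcd (w a) g : ℤ) = GCDMonoid.gcd (w a) g := Int.coe_gcd _ _
      rw [h1, hxs, ← hg]
      beta_reduce
      rw [if_pos rfl, ← hcoe, hbez]
      ring

private lemma exists_Q_of_surjective {m n : ℕ} (_hmn : m ≤ n) (M : Matrix (Fin m) (Fin n) ℤ)
    (hsurj : Function.Surjective M.mulVecLin) :
    ∃ Q : Matrix (Fin n) (Fin n) ℤ, IsUnit Q.det ∧
      M * Q = Matrix.of fun (i : Fin m) (j : Fin n) =>
        if (i : ℕ) = (j : ℕ) then (1 : ℤ) else 0 := by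
  classical
  set f := M.mulVecLin with hf
  obtain ⟨s, hs⟩ := f.exists_rightInverse_of_surjective (LinearMap.range_eq_top.2 hsurj)
  have hfs : ∀ z, f (s z) = z := fun z => by
    have := DFunLike.congr_fun hs z
    simpa using this
  obtain ⟨r, kb⟩ := (LinearMap.ker f).basisOfPid (Pi.basisFun ℤ (Fin n))
  let φ : ((Fin m → ℤ) × (LinearMap.ker f)) →ₗ[ℤ] (Fin n → ℤ) :=
    s ∘ₗ LinearMap.fst ℤ _ _ + (LinearMap.ker f).subtype ∘ₗ LinearMap.snd ℤ _ _
  have hφ : ∀ p : (Fin m → ℤ) × (LinearMap.ker f), φ p = s p.1 + (p.2 : Fin n → ℤ) :=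
    fun p => rfl
  have hbij : Function.Bijective φ := by
    constructor
    · intro p q hpq
      rw [hφ, hφ] at hpq
      have h1 : p.1 = q.1 := by
        have := congrArg f hpq
        simp only [map_add, hfs] at this
        simpa [LinearMap.mem_ker.1 p.2.2, LinearMap.mem_ker.1 q.2.2] using this
      have h2 : p.2 = q.2 := by
        apply Subtype.ext
        have := hpq
        rw [h1] at this
        exact add_left_cancel this
      exact Prod.ext h1 h2
    · intro z
      refine ⟨⟨f z, ⟨z - s (f z), ?_⟩⟩, ?_⟩
      · simp [LinearMap.mem_ker, map_sub, hfs]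
      · rw [hφ]
        simp
  let e : ((Fin m → ℤ) × (LinearMap.ker f)) ≃ₗ[ℤ] (Fin n → ℤ) :=
    LinearEquiv.ofBijective φ hbij
  let b : Module.Basis (Fin m ⊕ Fin r) ℤ (Fin n → ℤ) :=
    ((Pi.basisFun ℤ (Fin m)).prod kb).map e
  have hcard : m + r = n := by
    have h1 : Module.finrank ℤ (Fin n → ℤ) = Fintype.card (Fin m ⊕ Fin r) :=
      Module.finrank_eq_card_basis b
    simpa using h1.symm
  let e2 : (Fin m ⊕ Fin r) ≃ Fin n := finSumFinEquiv.trans (finCongr hcard)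
  let b' : Module.Basis (Fin n) ℤ (Fin n → ℤ) := b.reindex e2
  let Q : Matrix (Fin n) (Fin n) ℤ := (Pi.basisFun ℤ (Fin n)).toMatrix b'
  haveI := (Pi.basisFun ℤ (Fin n)).invertibleToMatrix b'
  refine ⟨Q, Matrix.isUnit_det_of_invertible Q, ?_⟩
  have hQ : ∀ i j, Q i j = b' j i := fun i j => by
    simp [Q, Module.Basis.toMatrix_apply]
  ext i j
  have hMQ : (M * Q) i j = f (b' j) i := by
    simp only [Matrix.mul_apply, hQ, hf, Matrix.mulVecLin_apply, Matrix.mulVec,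
      dotProduct]
  rw [hMQ]
  have hb' : b' j = b (e2.symm j) := Module.Basis.reindex_apply b e2 j
  have hbval : ∀ u, b u = s (((Pi.basisFun ℤ (Fin m)).prod kb u).1)
      + ((((Pi.basisFun ℤ (Fin m)).prod kb u).2 : Fin n → ℤ)) := by
    intro u
    simp only [b, Module.Basis.map_apply]
    exact hφ _
  rcases h : e2.symm j with p | q
  · have hjp : (j : ℕ) = (p : ℕ) := by
      have hj : j = e2 (Sum.inl p) := by rw [← h, Equiv.apply_symm_apply]
      rw [hj]
      simp [e2]
    have hcol : f (b' j) = Pi.basisFun ℤ (Fin m) p := by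
      rw [hb', h, hbval, Module.Basis.prod_apply_inl_fst, Module.Basis.prod_apply_inl_snd]
      simp [hfs]
    rw [hcol]
    simp only [Pi.basisFun_apply, Matrix.of_apply]
    rw [Pi.single_apply]
    by_cases hip : i = p
    · simp [hip, hjp]
    · have : ¬ ((i : ℕ) = (j : ℕ)) := by
        rw [hjp]; exact fun hc => hip (Fin.ext hc)
      simp [hip, this]
  · have hjq : (j : ℕ) = m + (q : ℕ) := by
      have hj : j = e2 (Sum.inr q) := by rw [← h, Equiv.apply_symm_apply]
      rw [hj]
      simp [e2]
    have hcol : f (b' j) = 0 := by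
      rw [hb', h, hbval, Module.Basis.prod_apply_inr_fst, Module.Basis.prod_apply_inr_snd]
      simp only [map_zero, map_add, zero_add]
      exact LinearMap.mem_ker.1 (kb q).2
    rw [hcol]
    have : ¬ ((i : ℕ) = (j : ℕ)) := by
      have := i.isLt
      omega
    simp [this]

open Matrix in
theorem stmt13 {n k : ℕ} (hk : k < n) (w : Fin n → ℤ)
    (M : Matrix (Fin (k + 1)) (Fin n) ℤ)
    (hM : M = Matrix.of fun (i : Fin (k + 1)) (j : Fin n) =>
      if (i : ℕ) < k then (if (j : ℕ) = (i : ℕ) then (1 : ℤ) else 0) else w j) :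
    allDiagonalOnes M ↔
      (Finset.univ.filter fun j : Fin n => k ≤ (j : ℕ)).gcd w = 1 := by
  classical
  set T : Finset (Fin n) := Finset.univ.filter fun j : Fin n => k ≤ (j : ℕ) with hT
  have hMapp : ∀ (i : Fin (k+1)) (j : Fin n),
      M i j = if (i : ℕ) < k then (if (j : ℕ) = (i : ℕ) then (1 : ℤ) else 0) else w j := by
    intro i j; rw [hM]; rfl
  -- a helper: computing rows of M *ᵥ x
  have hrow : ∀ (x : Fin n → ℤ) (i : Fin (k+1)) (hik : (i : ℕ) < k),
      (M *ᵥ x) i = x ⟨(i : ℕ), lt_trans hik hk⟩ := by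
    intro x i hik
    have : (M *ᵥ x) i = ∑ j : Fin n, M i j * x j := rfl
    rw [this]
    rw [Finset.sum_eq_single (⟨(i : ℕ), lt_trans hik hk⟩ : Fin n)]
    · rw [hMapp]; simp [hik]
    · intro j _ hj
      rw [hMapp]
      have : ¬ ((j : ℕ) = (i : ℕ)) := fun hc => hj (Fin.ext hc)
      simp [hik, this]
    · intro hc; exact absurd (Finset.mem_univ _) hc
  have hrowk : ∀ (x : Fin n → ℤ) (i : Fin (k+1)) (hik : ¬ ((i : ℕ) < k)),
      (M *ᵥ x) i = ∑ j : Fin n, w j * x j := by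
    intro x i hik
    have : (M *ᵥ x) i = ∑ j : Fin n, M i j * x j := rfl
    rw [this]
    refine Finset.sum_congr rfl fun j _ => ?_
    rw [hMapp]; simp [hik]
  constructor
  · rintro ⟨P, Q, hP, hQ, h⟩
    haveI := P.invertibleOfIsUnitDet hP
    -- find x with M *ᵥ x = e_k
    set t₀ : Fin (k+1) → ℤ := fun i => if (i : ℕ) = k then 1 else 0 with ht₀
    set y : Fin n → ℤ := fun j =>
      if hj : (j : ℕ) < k + 1 then (P *ᵥ t₀) ⟨(j : ℕ), hj⟩ else 0 with hy
    set x : Fin n → ℤ := Q *ᵥ y with hx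
    have hMx : M *ᵥ x = t₀ := by
      have hPMQ : (P * M * Q) *ᵥ y = P *ᵥ t₀ := by
        rw [h]
        ext i
        have : ((Matrix.of fun (i : Fin (k+1)) (j : Fin n) =>
            if (i : ℕ) = (j : ℕ) then (1 : ℤ) else 0) *ᵥ y) i
            = ∑ j : Fin n, (if (i : ℕ) = (j : ℕ) then (1 : ℤ) else 0) * y j := rfl
        rw [this, Finset.sum_eq_single (⟨(i : ℕ), lt_of_lt_of_le i.isLt hk⟩ : Fin n)]
        · simp [hy, i.isLt]
          intro hki; exact absurd hki (by have := i.isLt; omega)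
        · intro j _ hj
          have : ¬ ((i : ℕ) = (j : ℕ)) := fun hc => hj (Fin.ext hc.symm)
          simp [this]
        · intro hc; exact absurd (Finset.mem_univ _) hc
      have h2 : P *ᵥ (M *ᵥ x) = P *ᵥ t₀ := by
        rw [hx, Matrix.mulVec_mulVec, Matrix.mulVec_mulVec]
        exact hPMQ
      have h3 := congrArg (fun v => (⅟P) *ᵥ v) h2
      simpa [Matrix.mulVec_mulVec] using h3
    have hx0 : ∀ j : Fin n, (j : ℕ) < k → x j = 0 := by
      intro j hjk
      have hi : ((⟨(j : ℕ), by omega⟩ : Fin (k+1)) : ℕ) < k := hjk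
      have := hrow x ⟨(j : ℕ), by omega⟩ hi
      rw [hMx] at this
      have hne : ¬ (((⟨(j : ℕ), by omega⟩ : Fin (k+1)) : ℕ) = k) := by simp; omega
      rw [ht₀] at this
      simp only [hne, if_false] at this
      simpa using this.symm
    have hsum : ∑ j : Fin n, w j * x j = 1 := by
      have hik : ¬ (((⟨k, Nat.lt_succ_self k⟩ : Fin (k+1)) : ℕ) < k) := by simp
      have := hrowk x ⟨k, Nat.lt_succ_self k⟩ hik
      rw [hMx] at this
      simpa [ht₀] using this.symm
    have hdvd : T.gcd w ∣ 1 := by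
      have hzero : ∀ j ∈ Finset.univ, j ∉ T → w j * x j = 0 := by
        intro j _ hjT
        have hjk : (j : ℕ) < k := by
          by_contra hc
          exact hjT (by simp only [hT, Finset.mem_filter, Finset.mem_univ, true_and]; omega)
        rw [hx0 j hjk, mul_zero]
      have hsum' : ∑ j ∈ T, w j * x j = 1 := by
        rw [Finset.sum_subset (Finset.subset_univ T) hzero]
        exact hsum
      rw [← hsum']
      exact Finset.dvd_sum fun j hj => Dvd.dvd.mul_right (Finset.gcd_dvd hj) (x j)
    have hnorm : normalize (T.gcd w) = T.gcd w := Finset.normalize_gcd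
    have := normalize_eq_one.2 (isUnit_of_dvd_one hdvd)
    rw [hnorm] at this
    exact this
  · intro hgcd
    obtain ⟨c, hc0, hcs⟩ := bezout_finset w T
    rw [hgcd] at hcs
    have hcsum : ∑ j : Fin n, w j * c j = 1 := by
      have hzero : ∀ j ∈ Finset.univ, j ∉ T → w j * c j = 0 := fun j _ hjT => by
        rw [hc0 j hjT, mul_zero]
      rw [← Finset.sum_subset (Finset.subset_univ T) hzero, ← hcs]
      exact Finset.sum_congr rfl fun j _ => mul_comm _ _
    have hsurj : Function.Surjective M.mulVecLin := by
      intro t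
      set u : Fin n → ℤ := fun j =>
        if hj : (j : ℕ) < k then t ⟨(j : ℕ), by omega⟩ else 0 with hu
      set S : ℤ := ∑ j : Fin n, w j * u j with hS
      set r : ℤ := t ⟨k, Nat.lt_succ_self k⟩ - S with hr
      refine ⟨u + r • c, ?_⟩
      ext i
      have hMveq : M.mulVecLin (u + r • c) i = (M *ᵥ (u + r • c)) i := rfl
      rw [hMveq]
      by_cases hik : (i : ℕ) < k
      · rw [hrow _ i hik]
        have hjT : c (⟨(i : ℕ), lt_trans hik hk⟩ : Fin n) = 0 := by
          refine hc0 _ ?_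
          simp only [hT, Finset.mem_filter, Finset.mem_univ, true_and]
          omega
        have : t (⟨((⟨(i : ℕ), lt_trans hik hk⟩ : Fin n) : ℕ), Nat.lt_succ_of_lt hik⟩
            : Fin (k+1)) = t i := congrArg t (Fin.ext rfl)
        simp [hu, hjT, hik, this]
      · rw [hrowk _ i hik]
        have hival : (i : ℕ) = k := by have := i.isLt; omega
        have hti : t i = t ⟨k, Nat.lt_succ_self k⟩ := congrArg t (Fin.ext hival)
        have hexp : ∑ j : Fin n, w j * (u + r • c) j
            = S + r * ∑ j : Fin n, w j * c j := by
          rw [hS, Finset.mul_sum, ← Finset.sum_add_distrib]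
          refine Finset.sum_congr rfl fun j _ => ?_
          simp only [Pi.add_apply, Pi.smul_apply, smul_eq_mul]
          ring
        rw [hexp, hcsum, hti, hr]
        ring
    obtain ⟨Q, hQ, hMQ⟩ := exists_Q_of_surjective (by omega) M hsurj
    exact ⟨1, Q, by simp, hQ, by rw [Matrix.one_mul]; exact hMQ⟩
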